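/- Let D = 6. Define p1*(t1) = 0 if t1 ≥ 2, p1*(t1) = 1 if t1 ≤ −2, and p1*(t1) = (2 − t1)/4 otherwise; and define p2*(p1, t2) = 0 if D + 2 − 2·p1 ≤ t2, p2*(p1, t2) = 1 − p1 if D − 2 + 2·p1 ≥ t2, and p2*(p1, t2) = (2 + D − 2·p1 − t2)/4 otherwise. Then for all t1 ≥ 0 and t2 ≥ 0, the toll-setter's income p1*(t1)·t1 + p2*(p1*(t1), t2)·t2 is at most 4; moreover, for every t1 ≥ 2 the income equals 4 at t2 = 4, where p1*(t1) = 0 and p2*(0, 4) = 1. -/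

import Mathlib

/-- Nested toll-setting with `D = 6`: with the rational reactions `p1*` and `p2*`, the
toll-setter's income is at most `4` for all nonnegative tolls, and for every `t1 ≥ 2`
the income equals `4` at `t2 = 4`, where `p1*(t1) = 0` and `p2*(0, 4) = 1`. -/
theorem stmt3 :
    let D : ℝ := 6
    let p1s : ℝ → ℝ := fun t1 => if 2 ≤ t1 then 0 else if t1 ≤ -2 then 1 else (2 - t1) / 4
    let p2s : ℝ → ℝ → ℝ := fun p1 t2 => if D + 2 - 2 * p1 ≤ t2 then 0
      else if D - 2 + 2 * p1 ≥ t2 then 1 - p1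
      else (2 + D - 2 * p1 - t2) / 4
    (∀ t1 ≥ (0 : ℝ), ∀ t2 ≥ (0 : ℝ), p1s t1 * t1 + p2s (p1s t1) t2 * t2 ≤ 4) ∧
      ∀ t1 ≥ (2 : ℝ), p1s t1 * t1 + p2s (p1s t1) 4 * 4 = 4 ∧ p1s t1 = 0 ∧ p2s 0 4 = 1 := by
  refine ⟨?_, ?_⟩
  · intro t1 ht1 t2 ht2
    simp only
    split_ifs with h1 h2 h3 h4 h5 h6 h7 h8 <;>
      (try push_neg at *) <;>
      nlinarith [sq_nonneg (t2 - 4), sq_nonneg (2 - t1), sq_nonneg t2, sq_nonneg (t1 - 1),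
        mul_nonneg ht1 ht2, sq_nonneg (t2 - 4 - (2 - t1) / 2),
        mul_nonneg (mul_nonneg ht1 ht1) ht2, sq_nonneg (t1 * t2)]
  · intro t1 ht1
    norm_num [ht1]
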